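/- Let p ≡ 3 (mod 4) be a prime and α ≥ 1 an integer. Then 𝒢_{Z_{p^α}} is Ramanujan if and only if α = 1 or α = 2. -/

import Mathlib

/-- The set of squares of units of a commutative ring. -/
def QR (R : Type*) [CommRing R] : Set R := {x | ∃ u : Rˣ, (u : R) ^ 2 = x}

/-- The connection set of the quadratic unitary Cayley graph. -/
def TR (R : Type*) [CommRing R] : Set R := QR R ∪ -(QR R)

open scoped Classical in
/-- Adjacency matrix of the quadratic unitary Cayley graph `𝒢_R`. -/
noncomputable def adjMat (R : Type*) [CommRing R] [Fintype R] : Matrix R R ℝ :=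
  fun x y => if x - y ∈ TR R then 1 else 0

section Aux

variable {p α : ℕ}

lemma aux_isUnit_iff (hp : p.Prime) (hα : α ≠ 0) [NeZero (p ^ α)] (x : ZMod (p ^ α)) :
    IsUnit x ↔ ZMod.castHom (dvd_pow_self p hα) (ZMod p) x ≠ 0 := by
  haveI : Fact p.Prime := ⟨hp⟩
  constructor
  · intro hx h0
    exact not_isUnit_zero (h0 ▸ hx.map (ZMod.castHom (dvd_pow_self p hα) (ZMod p)))
  · intro h
    have hx : ((x.val : ℕ) : ZMod (p ^ α)) = x := ZMod.natCast_rightInverse x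
    have hfx : (ZMod.castHom (dvd_pow_self p hα) (ZMod p)) x = ((x.val : ℕ) : ZMod p) := by
      nth_rewrite 1 [← hx]; rw [map_natCast]
    rw [hfx, Ne, ZMod.natCast_eq_zero_iff] at h
    have hc : IsUnit ((x.val : ℕ) : ZMod (p ^ α)) := (ZMod.isUnit_iff_coprime _ _).mpr
      ((Nat.coprime_pow_right_iff (Nat.pos_of_ne_zero hα) _ _).mpr
        (Nat.coprime_comm.mp (hp.coprime_iff_not_dvd.mpr h)))
    rwa [hx] at hc

lemma aux_sq_eq_one (hp : p.Prime) (hp2 : p % 2 = 1) (hα : α ≠ 0) [NeZero (p ^ α)]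
    (y : ZMod (p ^ α)) (hy : y ^ 2 = 1) : y = 1 ∨ y = -1 := by
  haveI : Fact p.Prime := ⟨hp⟩
  set f := ZMod.castHom (dvd_pow_self p hα) (ZMod p) with hf
  have h2 : IsUnit (2 : ZMod (p ^ α)) := by
    have h22 : ((2 : ℕ) : ZMod (p ^ α)) = 2 := by norm_num
    rw [← h22, ZMod.isUnit_iff_coprime]
    refine (Nat.coprime_pow_right_iff (Nat.pos_of_ne_zero hα) _ _).mpr ?_
    rw [Nat.coprime_comm]
    exact hp.coprime_iff_not_dvd.mpr
      (fun hd => by have := (Nat.prime_dvd_prime_iff_eq hp Nat.prime_two).mp hd; omega)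
  have hz : (y - 1) * (y + 1) = 0 := by linear_combination hy
  have hkey : IsUnit (1 + y) ∨ IsUnit (1 - y) := by
    by_contra hc
    push_neg at hc
    rw [aux_isUnit_iff hp hα, not_not] at hc
    rw [aux_isUnit_iff hp hα, not_not] at hc
    have h0 : f (2 : ZMod (p ^ α)) = 0 := by
      have h3 : (2 : ZMod (p ^ α)) = (1 + y) + (1 - y) := by ring
      rw [h3, map_add, hc.1, hc.2, add_zero]
    exact (aux_isUnit_iff hp hα 2).mp h2 h0
  rcases hkey with h | h
  · left
    have := (IsUnit.mul_left_eq_zero (by rwa [add_comm] at h)).mp hz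
    linear_combination this
  · right
    have hz' : (y + 1) * (1 - y) = 0 := by linear_combination (-1 : ZMod (p ^ α)) * hz
    have := (IsUnit.mul_left_eq_zero h).mp hz'
    linear_combination this

lemma aux_mem_TR (hp : p.Prime) (hp4 : p % 4 = 3) (hα : 1 ≤ α) [NeZero (p ^ α)]
    (aux_sq : ∀ y : ZMod (p ^ α), y ^ 2 = 1 → y = 1 ∨ y = -1)
    (x : ZMod (p ^ α)) : x ∈ TR (ZMod (p ^ α)) ↔ IsUnit x := by
  haveI : Fact p.Prime := ⟨hp⟩
  constructor
  · rintro (⟨u, hu⟩ | h)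
    · exact hu ▸ (u ^ 2).isUnit
    · rw [Set.mem_neg] at h
      obtain ⟨u, hu⟩ := h
      have : IsUnit (-x) := hu ▸ (u ^ 2).isUnit
      simpa using this.neg
  · intro hx
    obtain ⟨u, hu⟩ := hx
    have hcard : Fintype.card (ZMod (p ^ α))ˣ = p ^ (α - 1) * (p - 1) := by
      rw [ZMod.card_units_eq_totient, Nat.totient_prime_pow hp (by omega)]
    set m := p ^ (α - 1) * ((p - 1) / 2) with hm
    have hmodd : m % 2 = 1 := by
      have h1 : Odd (p ^ (α - 1)) := Odd.pow (Nat.odd_iff.mpr (by omega))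
      have h2 : Odd ((p - 1) / 2) := Nat.odd_iff.mpr (by omega)
      exact Nat.odd_iff.mp (Nat.odd_mul.mpr ⟨h1, h2⟩)
    have hm2 : 2 * m = p ^ (α - 1) * (p - 1) := by
      rw [hm]
      have : 2 * ((p - 1) / 2) = p - 1 := by omega
      rw [← mul_assoc, mul_comm 2 _, mul_assoc, this]
    have hu2m : u ^ (2 * m) = 1 := by rw [hm2, ← hcard]; exact pow_card_eq_one
    have husq : ((u ^ m : (ZMod (p ^ α))ˣ) : ZMod (p ^ α)) ^ 2 = 1 := by
      rw [← Units.val_pow_eq_pow_val, ← pow_mul, mul_comm m 2, hu2m, Units.val_one]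
    set k := (m + 1) / 2 with hkdef
    have hk : 2 * k = m + 1 := by omega
    have hcast : ((u ^ k : (ZMod (p ^ α))ˣ) : ZMod (p ^ α)) ^ 2
        = ((u ^ m : (ZMod (p ^ α))ˣ) : ZMod (p ^ α)) * x := by
      rw [← Units.val_pow_eq_pow_val, ← pow_mul, mul_comm k 2, hk, pow_succ, Units.val_mul,
        Units.val_pow_eq_pow_val, hu]
    rcases aux_sq _ husq with h1 | h1
    · exact Or.inl ⟨u ^ k, by rw [hcast, h1, one_mul]⟩
    · refine Or.inr (Set.mem_neg.mpr ⟨u ^ k, ?_⟩)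
      rw [hcast, h1, neg_one_mul]

lemma aux_card_fiber (hp : p.Prime) (hα : α ≠ 0) [NeZero (p ^ α)] (t : ZMod p) :
    (Finset.univ.filter fun z : ZMod (p ^ α) =>
      ZMod.castHom (dvd_pow_self p hα) (ZMod p) z = t).card = p ^ (α - 1) := by
  haveI : Fact p.Prime := ⟨hp⟩
  classical
  set f := ZMod.castHom (dvd_pow_self p hα) (ZMod p) with hf
  set N := (Finset.univ.filter fun z : ZMod (p ^ α) => f z = 0).card with hN
  have hfib : ∀ s : ZMod p, (Finset.univ.filter fun z : ZMod (p ^ α) => f z = s).card = N := by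
    intro s
    set c : ZMod (p ^ α) := ((s.val : ℕ) : ZMod (p ^ α)) with hc
    have hfc : f c = s := by rw [hc, map_natCast]; exact ZMod.natCast_rightInverse s
    refine Finset.card_bij' (fun z _ => z - c) (fun z _ => z + c) ?_ ?_ ?_ ?_
    · intro a ha
      simp only [Finset.mem_filter, Finset.mem_univ, true_and] at ha ⊢
      rw [map_sub, ha, hfc, sub_self]
    · intro b hb
      simp only [Finset.mem_filter, Finset.mem_univ, true_and] at hb ⊢
      rw [map_add, hb, hfc, zero_add]
    · intro a _; ring
    · intro b _; ring
  have hsum : Fintype.card (ZMod (p ^ α))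
      = ∑ s : ZMod p, (Finset.univ.filter fun z : ZMod (p ^ α) => f z = s).card := by
    rw [← Finset.card_univ]
    exact Finset.card_eq_sum_card_fiberwise (fun x _ => Finset.mem_univ _)
  simp only [hfib, Finset.sum_const, Finset.card_univ, smul_eq_mul] at hsum
  rw [ZMod.card, ZMod.card] at hsum
  have hpa : p ^ α = p * p ^ (α - 1) := by
    conv_lhs => rw [show α = 1 + (α - 1) by omega]
    rw [pow_add, pow_one]
  rw [hfib t]
  exact (Nat.eq_of_mul_eq_mul_left hp.pos (hpa.symm.trans hsum)).symm

lemma aux_cubic (hp : p.Prime) (hα : α ≠ 0) [NeZero (p ^ α)]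
    (hTR : ∀ x : ZMod (p ^ α), x ∈ TR (ZMod (p ^ α)) ↔ IsUnit x)
    (hUnit : ∀ x : ZMod (p ^ α),
      IsUnit x ↔ ZMod.castHom (dvd_pow_self p hα) (ZMod p) x ≠ 0)
    (hfib : ∀ t : ZMod p, (Finset.univ.filter fun z : ZMod (p ^ α) =>
      ZMod.castHom (dvd_pow_self p hα) (ZMod p) z = t).card = p ^ (α - 1)) :
    adjMat (ZMod (p ^ α)) * (adjMat (ZMod (p ^ α)) * adjMat (ZMod (p ^ α)))
      + ((p : ℝ) ^ (α - 1)) • (adjMat (ZMod (p ^ α)) * adjMat (ZMod (p ^ α)))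
    = ((p : ℝ) ^ α - (p : ℝ) ^ (α - 1)) • (adjMat (ZMod (p ^ α)) * adjMat (ZMod (p ^ α)))
      + ((((p : ℝ) ^ α - (p : ℝ) ^ (α - 1))) * (p : ℝ) ^ (α - 1)) • adjMat (ZMod (p ^ α)) := by
  haveI : Fact p.Prime := ⟨hp⟩
  classical
  set f := ZMod.castHom (dvd_pow_self p hα) (ZMod p) with hf
  set c : ℝ := (p : ℝ) ^ (α - 1) with hc
  set r : ℝ := (p : ℝ) ^ α - c with hr
  set J : Matrix (ZMod (p ^ α)) (ZMod (p ^ α)) ℝ := Matrix.of fun _ _ => 1 with hJ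
  set B : Matrix (ZMod (p ^ α)) (ZMod (p ^ α)) ℝ :=
    Matrix.of fun x y => if f x = f y then 1 else 0 with hB
  set A := adjMat (ZMod (p ^ α)) with hAdef
  have hcastc : ((p ^ (α - 1) : ℕ) : ℝ) = c := by push_cast [hc]; ring
  have hA_eq : A = J - B := by
    ext x y
    have h1 : x - y ∈ TR (ZMod (p ^ α)) ↔ ¬ f x = f y := by
      rw [hTR, hUnit, Ne, map_sub, sub_eq_zero]
    by_cases h : f x = f y
    · simp [hAdef, adjMat, hJ, hB, h1, h, Matrix.sub_apply]
    · simp [hAdef, adjMat, hJ, hB, h1, h, Matrix.sub_apply]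
  have hJJ : J * J = ((p : ℝ) ^ α) • J := by
    ext x y
    simp only [Matrix.mul_apply, hJ, Matrix.of_apply, Matrix.smul_apply, one_mul,
      Finset.sum_const, Finset.card_univ, nsmul_eq_mul, smul_eq_mul, mul_one, ZMod.card]
    push_cast
    ring
  have hJB : J * B = c • J := by
    ext x y
    simp only [Matrix.mul_apply, hJ, hB, Matrix.of_apply, Matrix.smul_apply, one_mul,
      smul_eq_mul, mul_one]
    rw [Finset.sum_boole, hfib (f y), hcastc]
  have hBJ : B * J = c • J := by
    ext x y
    simp only [Matrix.mul_apply, hJ, hB, Matrix.of_apply, Matrix.smul_apply, mul_one,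
      smul_eq_mul]
    have : ∀ z : ZMod (p ^ α), (if f x = f z then (1:ℝ) else 0) = (if f z = f x then 1 else 0) :=
      fun z => by by_cases h : f x = f z <;> simp [h, eq_comm, h]
    rw [Finset.sum_congr rfl fun z _ => this z, Finset.sum_boole, hfib (f x), hcastc]
  have hBB : B * B = c • B := by
    ext x y
    simp only [Matrix.mul_apply, hB, Matrix.of_apply, Matrix.smul_apply, smul_eq_mul]
    by_cases h : f x = f y
    · have : ∀ z : ZMod (p ^ α), (if f x = f z then (1:ℝ) else 0) * (if f z = f y then 1 else 0)
          = (if f z = f x then 1 else 0) := by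
        intro z
        by_cases hz : f z = f x
        · rw [if_pos hz.symm, if_pos (hz.trans h), if_pos hz]; norm_num
        · rw [if_neg (fun hh => hz hh.symm), if_neg hz, zero_mul]
      rw [Finset.sum_congr rfl fun z _ => this z, Finset.sum_boole, hfib (f x), hcastc, if_pos h,
        mul_one]
    · have : ∀ z : ZMod (p ^ α), (if f x = f z then (1:ℝ) else 0) * (if f z = f y then 1 else 0)
          = 0 := by
        intro z
        by_cases hz : f x = f z
        · have : ¬ f z = f y := fun hzy => h (hz.trans hzy)
          simp [this]
        · simp [hz]
      rw [Finset.sum_congr rfl fun z _ => this z, Finset.sum_const, smul_zero, if_neg h, mul_zero]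
  have hM : A * A + c • A = r • J := by
    rw [hA_eq, sub_mul, mul_sub, mul_sub, hJJ, hJB, hBJ, hBB, hr]
    module
  have hAJ : A * J = r • J := by
    rw [hA_eq, sub_mul, hJJ, hBJ, hr]
    module
  have hfinal : A * (A * A + c • A) = r • (A * A + c • A) := by
    rw [hM, Matrix.mul_smul, hAJ]
  calc A * (A * A) + c • (A * A)
      = A * (A * A + c • A) := by rw [mul_add, Matrix.mul_smul]
    _ = r • (A * A + c • A) := hfinal
    _ = r • (A * A) + (r * c) • A := by rw [smul_add, smul_smul]

open Matrix in
lemma aux_eigvec (hp : p.Prime) (hα : α ≠ 0) [NeZero (p ^ α)]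
    (hTR : ∀ x : ZMod (p ^ α), x ∈ TR (ZMod (p ^ α)) ↔ IsUnit x)
    (hUnit : ∀ x : ZMod (p ^ α),
      IsUnit x ↔ ZMod.castHom (dvd_pow_self p hα) (ZMod p) x ≠ 0)
    (hfib : ∀ t : ZMod p, (Finset.univ.filter fun z : ZMod (p ^ α) =>
      ZMod.castHom (dvd_pow_self p hα) (ZMod p) z = t).card = p ^ (α - 1)) :
    adjMat (ZMod (p ^ α)) *ᵥ
      (fun z => (if ZMod.castHom (dvd_pow_self p hα) (ZMod p) z = 0 then (1:ℝ) else 0)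
        - (if ZMod.castHom (dvd_pow_self p hα) (ZMod p) z = 1 then 1 else 0))
    = (-(p : ℝ) ^ (α - 1)) •
      (fun z => (if ZMod.castHom (dvd_pow_self p hα) (ZMod p) z = 0 then (1:ℝ) else 0)
        - (if ZMod.castHom (dvd_pow_self p hα) (ZMod p) z = 1 then 1 else 0)) := by
  haveI : Fact p.Prime := ⟨hp⟩
  classical
  set f := ZMod.castHom (dvd_pow_self p hα) (ZMod p) with hf
  set c : ℝ := (p : ℝ) ^ (α - 1) with hc
  have hcastc : ((p ^ (α - 1) : ℕ) : ℝ) = c := by push_cast [hc]; ring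
  set v : ZMod (p ^ α) → ℝ := fun z => (if f z = 0 then (1:ℝ) else 0)
    - (if f z = 1 then 1 else 0) with hv
  have hAxz : ∀ x z : ZMod (p ^ α),
      adjMat (ZMod (p ^ α)) x z = 1 - (if f x = f z then (1:ℝ) else 0) := by
    intro x z
    have h1 : x - z ∈ TR (ZMod (p ^ α)) ↔ ¬ f x = f z := by
      rw [hTR, hUnit, Ne, map_sub, sub_eq_zero]
    by_cases h : f x = f z
    · rw [show adjMat (ZMod (p^α)) x z = if x - z ∈ TR (ZMod (p^α)) then (1:ℝ) else 0 from rfl,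
        if_neg (fun hh => (h1.mp hh) h), if_pos h]; ring
    · rw [show adjMat (ZMod (p^α)) x z = if x - z ∈ TR (ZMod (p^α)) then (1:ℝ) else 0 from rfl,
        if_pos (h1.mpr h), if_neg h]; ring
  have key : ∀ (x : ZMod (p ^ α)) (t : ZMod p),
      ∑ z, (if f x = f z then (1:ℝ) else 0) * (if f z = t then 1 else 0)
        = if f x = t then c else 0 := by
    intro x t
    by_cases h : f x = t
    · have hterm : ∀ z : ZMod (p ^ α), (if f x = f z then (1:ℝ) else 0) * (if f z = t then 1 else 0)
          = if f z = t then 1 else 0 := by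
        intro z
        by_cases hz : f z = t
        · rw [if_pos (h.trans hz.symm), if_pos hz, one_mul]
        · rw [if_neg hz, mul_zero]
      rw [Finset.sum_congr rfl fun z _ => hterm z, Finset.sum_boole, hfib t, hcastc, if_pos h]
    · have hterm : ∀ z : ZMod (p ^ α), (if f x = f z then (1:ℝ) else 0) * (if f z = t then 1 else 0)
          = 0 := by
        intro z
        by_cases hz : f z = t
        · rw [if_neg (fun hh => h (hh.trans hz)), zero_mul]
        · rw [if_neg hz, mul_zero]
      rw [Finset.sum_congr rfl fun z _ => hterm z, Finset.sum_const, smul_zero, if_neg h]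
  have hsumv : ∑ z, v z = 0 := by
    rw [hv]
    rw [Finset.sum_sub_distrib, Finset.sum_boole, Finset.sum_boole, hfib 0, hfib 1, sub_self]
  funext x
  have lhs_eq : (adjMat (ZMod (p ^ α)) *ᵥ v) x
      = ∑ z, v z - ∑ z, (if f x = f z then (1:ℝ) else 0) * v z := by
    rw [Matrix.mulVec, dotProduct]
    rw [Finset.sum_congr rfl fun z _ => by rw [hAxz x z, sub_mul, one_mul]]
    rw [Finset.sum_sub_distrib]
  have hBv : ∑ z, (if f x = f z then (1:ℝ) else 0) * v z
      = (if f x = 0 then c else 0) - (if f x = 1 then c else 0) := by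
    rw [hv]
    simp only [mul_sub]
    rw [Finset.sum_sub_distrib, key x 0, key x 1]
  rw [lhs_eq, hsumv, hBv]
  have h01 : (0 : ZMod p) ≠ 1 := zero_ne_one
  show _ = -c * v x
  simp only [hv]
  by_cases h0 : f x = 0
  · have h1 : ¬ f x = 1 := fun h1 => h01 (h0.symm.trans h1)
    simp only [h0, h1, if_true, if_false, if_pos rfl, if_neg h01]
    ring
  · by_cases h1 : f x = 1
    · simp only [h0, h1, if_true, if_false, if_pos rfl, if_neg (Ne.symm h01)]
      ring
    · simp only [h0, h1, if_false]
      ring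

open Matrix in
lemma aux_exists_eig {n : Type*} [Fintype n] [DecidableEq n] {A : Matrix n n ℝ}
    (hA : A.IsHermitian) {v : n → ℝ} {μ : ℝ} (hv : v ≠ 0) (hAv : A *ᵥ v = μ • v) :
    ∃ i, hA.eigenvalues i = μ := by
  have hdet : (μ • (1 : Matrix n n ℝ) - A).det = 0 := by
    rw [← Matrix.exists_mulVec_eq_zero_iff]
    exact ⟨v, hv, by
      rw [Matrix.sub_mulVec, Matrix.smul_mulVec, Matrix.one_mulVec, hAv, sub_self]⟩
  set U := (hA.eigenvectorUnitary : Matrix n n ℝ) with hUdef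
  set D : Matrix n n ℝ := Matrix.diagonal (RCLike.ofReal ∘ hA.eigenvalues) with hD
  have hU1 : U * star U = 1 := Matrix.mem_unitaryGroup_iff.mp hA.eigenvectorUnitary.2
  have hdiag : μ • (1 : Matrix n n ℝ) - A = U * (μ • 1 - D) * star U := by
    rw [Matrix.mul_sub, Matrix.sub_mul]
    congr 1
    · rw [Matrix.mul_smul, mul_one, Matrix.smul_mul, hU1]
    · exact hA.spectral_theorem
  have hUd : U.det * (star U).det = 1 := by rw [← Matrix.det_mul, hU1, Matrix.det_one]
  have hdet2 : (μ • (1 : Matrix n n ℝ) - D).det = 0 := by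
    rw [hdiag, Matrix.det_mul, Matrix.det_mul] at hdet
    rcases mul_eq_zero.mp hdet with h | h
    · rcases mul_eq_zero.mp h with h' | h'
      · exact absurd h' (left_ne_zero_of_mul_eq_one hUd)
      · exact h'
    · exact absurd h (right_ne_zero_of_mul_eq_one hUd)
  have hform : μ • (1 : Matrix n n ℝ) - D = Matrix.diagonal (fun i => μ - hA.eigenvalues i) := by
    rw [hD, Matrix.smul_one_eq_diagonal, ← Matrix.diagonal_sub]
    congr 1
  rw [hform, Matrix.det_diagonal] at hdet2
  obtain ⟨i, _, hi⟩ := Finset.prod_eq_zero_iff.mp hdet2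
  exact ⟨i, by linarith [sub_eq_zero.mp hi]⟩

end Aux

open Matrix in
open scoped Classical in
/-- For a prime `p ≡ 3 (mod 4)` and `α ≥ 1`, the graph `𝒢_{ℤ_{p^α}}`, which is
`(p^α − p^{α−1})`-regular, is Ramanujan if and only if `α = 1` or `α = 2`. -/
theorem stmt18 (p α : ℕ) [NeZero (p ^ α)] (hp : p.Prime) (hp4 : p % 4 = 3) (hα : 1 ≤ α)
    (hA : (adjMat (ZMod (p ^ α))).IsHermitian) :
    (∀ i, |hA.eigenvalues i| ≠ (p : ℝ) ^ α - (p : ℝ) ^ (α - 1) →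
        |hA.eigenvalues i| ≤ 2 * Real.sqrt ((p : ℝ) ^ α - (p : ℝ) ^ (α - 1) - 1)) ↔
      (α = 1 ∨ α = 2) := by
  haveI : Fact p.Prime := ⟨hp⟩
  have hα0 : α ≠ 0 := by omega
  have hp3 : 3 ≤ p := by have := hp.two_le; omega
  have hp2 : p % 2 = 1 := by omega
  have hUnit := aux_isUnit_iff (p := p) (α := α) hp hα0
  have hTR := aux_mem_TR hp hp4 hα (fun y hy => aux_sq_eq_one hp hp2 hα0 y hy)
  have hfib := aux_card_fiber (p := p) (α := α) hp hα0
  set c : ℝ := (p : ℝ) ^ (α - 1) with hc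
  set r : ℝ := (p : ℝ) ^ α - c with hr
  have hcpos : (0 : ℝ) < c := by positivity
  have hpR : (3 : ℝ) ≤ (p : ℝ) := by exact_mod_cast hp3
  have hpa : (p : ℝ) ^ α = c * (p : ℝ) := by
    rw [hc, ← pow_succ]
    congr 1
    omega
  have hrpos : (0 : ℝ) < r := by rw [hr, hpa]; nlinarith
  have hcube := aux_cubic hp hα0 hTR hUnit hfib
  have heig : ∀ i, hA.eigenvalues i = 0 ∨ hA.eigenvalues i = -c ∨ hA.eigenvalues i = r := by
    intro i
    set lam := hA.eigenvalues i with hlam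
    set w : ZMod (p ^ α) → ℝ := ⇑(hA.eigenvectorBasis i) with hw
    have hw0 : w ≠ 0 := by
      intro h
      apply hA.eigenvectorBasis.orthonormal.ne_zero i
      ext j
      exact congrFun h j
    have h1 : adjMat (ZMod (p ^ α)) *ᵥ w = lam • w := hA.mulVec_eigenvectorBasis i
    have h2 : adjMat (ZMod (p ^ α)) *ᵥ (adjMat (ZMod (p ^ α)) *ᵥ w) = (lam ^ 2) • w := by
      rw [h1, Matrix.mulVec_smul, h1, smul_smul]; ring_nf
    have h3 : adjMat (ZMod (p ^ α)) *ᵥ (adjMat (ZMod (p ^ α)) *ᵥ (adjMat (ZMod (p ^ α)) *ᵥ w))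
        = (lam ^ 3) • w := by
      rw [h2, Matrix.mulVec_smul, h1, smul_smul]; ring_nf
    have happ := congrArg (fun M => M *ᵥ w) hcube
    simp only [Matrix.add_mulVec, Matrix.smul_mulVec, ← Matrix.mulVec_mulVec] at happ
    simp only [Matrix.mulVec_smul, h1, smul_smul] at happ
    rw [← add_smul, ← add_smul] at happ
    obtain ⟨j, hj⟩ := Function.ne_iff.mp hw0
    have hsc := mul_right_cancel₀ hj (congrFun happ j)
    have hfac : (lam - r) * (lam * (lam + c)) = 0 := by linear_combination hsc
    rcases mul_eq_zero.mp hfac with h | h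
    · exact Or.inr (Or.inr (sub_eq_zero.mp h))
    · rcases mul_eq_zero.mp h with h' | h'
      · exact Or.inl h'
      · exact Or.inr (Or.inl (eq_neg_of_add_eq_zero_left h'))
  constructor
  · intro h
    by_contra hαc
    push_neg at hαc
    have hα3 : 3 ≤ α := by omega
    have hvec := aux_eigvec hp hα0 hTR hUnit hfib
    have hvne : (fun z => (if ZMod.castHom (dvd_pow_self p hα0) (ZMod p) z = 0 then (1:ℝ) else 0)
        - (if ZMod.castHom (dvd_pow_self p hα0) (ZMod p) z = 1 then 1 else 0)) ≠ 0 := by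
      intro hzz
      have h00 := congrFun hzz 0
      simp only [map_zero, if_pos rfl, Pi.zero_apply] at h00
      rw [if_neg (zero_ne_one)] at h00
      norm_num at h00
    obtain ⟨i, hi⟩ := aux_exists_eig hA hvne hvec
    have habs : |hA.eigenvalues i| = c := by rw [hi, abs_neg, abs_of_pos hcpos]
    have hcr : c < r := by rw [hr, hpa]; nlinarith
    have hb := h i (by rw [habs]; exact ne_of_lt hcr)
    rw [habs] at hb
    have hcp2 : (p : ℝ) ^ 2 ≤ c := by
      rw [hc]
      exact pow_le_pow_right₀ (by linarith) (by omega)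
    have hlt : Real.sqrt (r - 1) < c / 2 := by
      rw [Real.sqrt_lt' (by positivity)]
      rw [hr, hpa]
      nlinarith [sq_nonneg ((p : ℝ) - 2), mul_nonneg hcpos.le (sq_nonneg ((p : ℝ) - 2))]
    linarith
  · rintro hα12 i hineq
    rcases heig i with h0 | hneg | hr'
    · rw [h0, abs_zero]
      positivity
    · rw [hneg, abs_neg, abs_of_pos hcpos]
      have hr1 : c ^ 2 / 4 ≤ r - 1 := by
        rcases hα12 with h1 | h2
        · have hc1 : c = 1 := by rw [hc, h1]; norm_num
          have hr1' : r = (p : ℝ) - 1 := by rw [hr, hc1, h1]; norm_num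
          rw [hc1, hr1']; nlinarith
        · have hc2 : c = (p : ℝ) := by rw [hc, h2]; norm_num
          have hr2 : r = (p : ℝ) ^ 2 - (p : ℝ) := by rw [hr, hc2, h2]
          rw [hc2, hr2]; nlinarith
      have hle : c / 2 ≤ Real.sqrt (r - 1) := by
        rw [Real.le_sqrt (by positivity) (by nlinarith [hcpos, sq_nonneg c])]
        nlinarith
      linarith
    · exact absurd (by rw [hr', abs_of_pos hrpos]) hineq
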